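/- Let R be an integral domain and ⋆ a (semi)star operation of finite type on R. If R is ⋆-stable and completely integrally closed, then R is a Krull domain and ⋆ = t = w. -/

import Mathlib

noncomputable section

section Defs

variable (R K : Type*) [CommRing R] [CommRing K] [Algebra R K]

/-- The residual `(E : F) = {x ∈ K : xF ⊆ E}` of two `R`-submodules of `K`. -/
def resid (E F : Submodule R K) : Submodule R K where
  carrier := {x : K | ∀ y ∈ F, x * y ∈ E}
  add_mem' := by
    intro a b ha hb y hy
    simpa only [Set.mem_setOf_eq, add_mul] using E.add_mem (ha y hy) (hb y hy)
  zero_mem' := by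
    intro y hy
    simp
  smul_mem' := by
    intro c x hx y hy
    simpa [smul_mul_assoc] using E.smul_mem c (hx y hy)

/-- The image of an ideal of `R` as an `R`-submodule of `K`. -/
def idealToSub (I : Ideal R) : Submodule R K :=
  Submodule.map (Algebra.linearMap R K) I

end Defs

/-- A semistar operation on an integral domain `R` with quotient field `K`. -/
structure SemistarOp (R K : Type*) [CommRing R] [Field K] [Algebra R K] where
  star : Submodule R K → Submodule R K
  star_smul : ∀ x : K, x ≠ 0 → ∀ E : Submodule R K, E ≠ ⊥ →
    star (Submodule.span R {x} * E) = Submodule.span R {x} * star E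
  mono : ∀ E F : Submodule R K, E ≠ ⊥ → E ≤ F → star E ≤ star F
  le_star : ∀ E : Submodule R K, E ≠ ⊥ → E ≤ star E
  idem : ∀ E : Submodule R K, E ≠ ⊥ → star (star E) = star E

section Ops

variable (R K : Type*) [CommRing R] [Field K] [Algebra R K]

/-- The `v`-operation (divisorial closure) `E ↦ (R : (R : E))`. -/
def vop (E : Submodule R K) : Submodule R K := resid R K 1 (resid R K 1 E)

/-- The `t`-operation, the finite-type version of `v`. -/
def top (E : Submodule R K) : Submodule R K :=
  ⨆ (F : Submodule R K) (_ : F.FG ∧ F ≠ ⊥ ∧ F ≤ E), vop R K F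

/-- The `w`-operation `E ↦ ⋃ {(E : F) : F f.g. nonzero with F^t = R}`. -/
def wop (E : Submodule R K) : Submodule R K :=
  ⨆ (F : Submodule R K) (_ : F.FG ∧ F ≠ ⊥ ∧ top R K F = 1), resid R K E F

/-- `M` is a maximal proper `f`-closed ideal (e.g. a `⋆`-maximal ideal). -/
def IsOpMaxIdeal (f : Submodule R K → Submodule R K) (M : Submodule R K) : Prop :=
  M ≠ ⊥ ∧ M < 1 ∧ f M = M ∧
    ∀ J : Submodule R K, J ≠ ⊥ → J < 1 → f J = J → M ≤ J → M = J

/-- The localization `E R_P` of a submodule `E` at a prime `P`, inside `K`. -/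
def locSub (P : Ideal R) (E : Submodule R K) : Submodule R K :=
  Submodule.span R {x : K | ∃ s : R, s ∉ P ∧ s • x ∈ E}

/-- The subring of `K` determined by the submodule `T` is a stable domain:
every nonzero ideal `E` of `T` is invertible in `(E : E)`. -/
def SubringStable (T : Submodule R K) : Prop :=
  ∀ E : Submodule R K, E ≠ ⊥ → E ≤ T → T * E ≤ E →
    E * resid R K (resid R K E E) E = resid R K E E

/-- The subring of `K` determined by `T` is a divisorial domain: every nonzero
fractional ideal of `T` is divisorial. -/
def SubringDivisorial (T : Submodule R K) : Prop :=
  ∀ J : Submodule R K, J ≠ ⊥ → T * J ≤ J →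
    (∃ x : K, x ≠ 0 ∧ ∀ y ∈ J, x * y ∈ T) →
    resid R K T (resid R K T J) = J

/-- The subring of `K` determined by `T` is `v`-coherent: for every nonzero
finitely generated ideal `I = S·T` of `T`, the ideal `(T : I)` is `v`-finite. -/
def SubringVCoherent (T : Submodule R K) : Prop :=
  ∀ S : Submodule R K, S.FG → S ≠ ⊥ → S ≤ T →
    ∃ H : Submodule R K, H.FG ∧ H ≠ ⊥ ∧
      resid R K T (S * T) = resid R K T (resid R K T (H * T))

/-- `R` has finite character with respect to the maximal ideals singled out by `f`. -/
def OpFiniteCharacter (f : Submodule R K → Submodule R K) : Prop :=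
  ∀ I : Submodule R K, I ≠ ⊥ → I ≤ 1 →
    {M : Submodule R K | IsOpMaxIdeal R K f M ∧ I ≤ M}.Finite

/-- Every nonzero finitely generated ideal is `t`-invertible (PvMD). -/
def IsPvMDsub : Prop :=
  ∀ G : Submodule R K, G.FG → G ≠ ⊥ → G ≤ 1 →
    top R K (G * resid R K 1 G) = 1

end Ops

namespace SemistarOp

variable {R K : Type*} [CommRing R] [Field K] [Algebra R K] (s : SemistarOp R K)

/-- `⋆`-stability for the ideals of the subring determined by `T`. -/
def StarStableOver (T : Submodule R K) : Prop :=
  ∀ E : Submodule R K, E ≠ ⊥ → E ≤ T → T * E ≤ E →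
    s.star (s.star E * resid R K (resid R K (s.star E) (s.star E)) (s.star E))
      = resid R K (s.star E) (s.star E)

/-- `R` is `⋆`-stable: each nonzero ideal `I` is such that `I^⋆` is
`⋆̇`-invertible in `(I^⋆ : I^⋆)`. -/
def StarStable : Prop := s.StarStableOver (1 : Submodule R K)

/-- `⋆` is of finite type. -/
def FinType : Prop :=
  ∀ E : Submodule R K, E ≠ ⊥ →
    s.star E = ⨆ (F : Submodule R K) (_ : F.FG ∧ F ≠ ⊥ ∧ F ≤ E), s.star F

/-- `⋆ = ⋆̃`: the operation is spectral and of finite type, i.e. it is given by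
`E^⋆ = ⋃ {(E : F) : F f.g. nonzero with F^⋆ = R}`. -/
def IsSpectralFT : Prop :=
  ∀ E : Submodule R K, E ≠ ⊥ →
    s.star E = ⨆ (F : Submodule R K) (_ : F.FG ∧ F ≠ ⊥ ∧ s.star F = 1), resid R K E F

/-- The `⋆`-integral closure `R^{[⋆]} = ⋃ {(F^⋆ : F^⋆) : F f.g. nonzero}`. -/
def starIntClosure : Submodule R K :=
  ⨆ (F : Submodule R K) (_ : F.FG ∧ F ≠ ⊥), resid R K (s.star F) (s.star F)

end SemistarOp


section MoreOps

variable (R K : Type*) [CommRing R] [Field K] [Algebra R K]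

/-- `R` is `w`-stable: for each nonzero ideal `I`, `I^w` is invertible in
`(I^w : I^w)` with respect to the restriction of `w`. -/
def WStable : Prop :=
  ∀ I : Submodule R K, I ≠ ⊥ → I ≤ 1 →
    wop R K (wop R K I * resid R K (resid R K (wop R K I) (wop R K I)) (wop R K I))
      = resid R K (wop R K I) (wop R K I)

/-- `R` is completely integrally closed in its quotient field `K`. -/
def CICsub : Prop :=
  ∀ x : K, (∃ c : R, c ≠ 0 ∧ ∀ n : ℕ, c • x ^ n ∈ (1 : Submodule R K)) →
    x ∈ (1 : Submodule R K)

/-- `R` is `w`-divisorial: `w = v` on nonzero fractional ideals. -/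
def WDivisorial : Prop :=
  ∀ J : Submodule R K, J ≠ ⊥ →
    (∃ d : R, d ≠ 0 ∧ ∀ x ∈ J, d • x ∈ (1 : Submodule R K)) →
    wop R K J = vop R K J

/-- `R` is a Krull domain: completely integrally closed with the ascending chain
condition on (integral) divisorial ideals. -/
def IsKrullSub : Prop :=
  CICsub R K ∧
    ∀ c : ℕ → Submodule R K,
      (∀ n, c n ≠ ⊥ ∧ c n ≤ 1 ∧ vop R K (c n) = c n) → Monotone c →
        ∃ n, ∀ m, n ≤ m → c m = c n

end MoreOps

end

section Aux
set_option linter.unusedSectionVars false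

open Submodule

variable {R K : Type*} [CommRing R] [IsDomain R] [Field K] [Algebra R K]

theorem mem_resid {A F : Submodule R K} {x : K} :
    x ∈ resid R K A F ↔ ∀ y ∈ F, x * y ∈ A := Iff.rfl

theorem le_resid_iff {X A F : Submodule R K} : X ≤ resid R K A F ↔ X * F ≤ A := by
  rw [Submodule.mul_le]
  exact ⟨fun h m hm n hn => h hm n hn, fun h x hx y hy => h x hx y hy⟩

theorem resid_mul_le (A F : Submodule R K) : resid R K A F * F ≤ A :=
  le_resid_iff.mp le_rfl

theorem resid_mono {A A' : Submodule R K} (F : Submodule R K) (h : A ≤ A') :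
    resid R K A F ≤ resid R K A' F := fun _ hx y hy => h (hx y hy)

theorem resid_anti (A : Submodule R K) {F F' : Submodule R K} (h : F ≤ F') :
    resid R K A F' ≤ resid R K A F := fun _ hx y hy => hx y (h hy)

theorem one_le_resid_self (E : Submodule R K) : (1 : Submodule R K) ≤ resid R K E E :=
  le_resid_iff.mpr (by rw [one_mul])

theorem le_resid_one_self {E : Submodule R K} (h : E ≤ 1) :
    (1 : Submodule R K) ≤ resid R K 1 E :=
  le_resid_iff.mpr (by rw [one_mul]; exact h)

theorem one_mem_one : (1 : K) ∈ (1 : Submodule R K) := Submodule.one_le.mp le_rfl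

theorem one_ne_bot : (1 : Submodule R K) ≠ ⊥ :=
  (Submodule.ne_bot_iff _).mpr ⟨1, one_mem_one, one_ne_zero⟩

theorem resid_one_ne_bot {E : Submodule R K} (h : E ≤ 1) : resid R K 1 E ≠ ⊥ := by
  intro hb
  exact one_ne_bot (le_bot_iff.mp (hb ▸ le_resid_one_self h))

theorem le_vop (E : Submodule R K) : E ≤ vop R K E := fun x hx y hy => by
  rw [mul_comm]; exact hy x hx

theorem vop_mono {E F : Submodule R K} (h : E ≤ F) : vop R K E ≤ vop R K F :=
  resid_anti _ (resid_anti _ h)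

theorem vop_resid_one (E : Submodule R K) :
    vop R K (resid R K 1 E) = resid R K 1 E :=
  le_antisymm (resid_anti _ (le_vop E)) (le_vop _)

theorem resid_one_one : resid R K 1 (1 : Submodule R K) = 1 := by
  apply le_antisymm _ (one_le_resid_self 1)
  intro x hx
  simpa using hx 1 one_mem_one

theorem vop_one : vop R K (1 : Submodule R K) = 1 := by
  unfold vop
  rw [resid_one_one, resid_one_one]

theorem vop_le_one {E : Submodule R K} (h : E ≤ 1) : vop R K E ≤ 1 := by
  have := resid_anti (R := R) (K := K) 1 (le_resid_one_self h)
  rwa [resid_one_one] at this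

theorem mem_resid_span_singleton {A : Submodule R K} {y z : K} :
    z ∈ resid R K A (span R {y}) ↔ z * y ∈ A := by
  constructor
  · intro h; exact h y (mem_span_singleton_self y)
  · intro h w hw
    obtain ⟨r, rfl⟩ := mem_span_singleton.mp hw
    rw [mul_smul_comm]
    exact A.smul_mem r h

theorem mem_resid_span_mul {A E : Submodule R K} {x y : K} :
    y ∈ resid R K A (span R {x} * E) ↔ x * y ∈ resid R K A E := by
  constructor
  · intro h e he
    have h2 := h (x * e) (mul_mem_mul (mem_span_singleton_self x) he)
    rwa [show y * (x * e) = x * y * e by ring] at h2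
  · intro h z hz
    obtain ⟨e, he, rfl⟩ := mem_span_singleton_mul.mp hz
    have h2 := h e he
    rwa [show y * (x * e) = x * y * e by ring]

theorem mem_span_singleton_mul_iff {x z : K} (hx : x ≠ 0) {F : Submodule R K} :
    z ∈ span R {x} * F ↔ x⁻¹ * z ∈ F := by
  rw [mem_span_singleton_mul]
  constructor
  · rintro ⟨f, hf, rfl⟩; rwa [inv_mul_cancel_left₀ hx]
  · intro h; exact ⟨x⁻¹ * z, h, by field_simp⟩

theorem span_singleton_mul_cancel {x : K} (hx : x ≠ 0) {X Y : Submodule R K}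
    (h : span R {x} * X = span R {x} * Y) : X = Y := by
  ext z
  have h1 : z ∈ X ↔ x * z ∈ span R {x} * X := by
    rw [mem_span_singleton_mul_iff hx, inv_mul_cancel_left₀ hx]
  have h2 : z ∈ Y ↔ x * z ∈ span R {x} * Y := by
    rw [mem_span_singleton_mul_iff hx, inv_mul_cancel_left₀ hx]
  rw [h1, h2, h]

theorem resid_span_singleton_mul {A E : Submodule R K} {x : K} (hx : x ≠ 0) :
    resid R K A (span R {x} * E) = span R {x⁻¹} * resid R K A E := by
  ext y
  rw [mem_resid_span_mul, mem_span_singleton_mul_iff (inv_ne_zero hx), inv_inv]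

theorem vop_span_mul {E : Submodule R K} {x : K} (hx : x ≠ 0) :
    vop R K (span R {x} * E) = span R {x} * vop R K E := by
  unfold vop
  rw [resid_span_singleton_mul hx, resid_span_singleton_mul (inv_ne_zero hx), inv_inv]

theorem mul_ne_bot {X Y : Submodule R K} (hX : X ≠ ⊥) (hY : Y ≠ ⊥) : X * Y ≠ ⊥ := by
  obtain ⟨a, ha, ha0⟩ := X.ne_bot_iff.mp hX
  obtain ⟨b, hb, hb0⟩ := Y.ne_bot_iff.mp hY
  exact (X * Y).ne_bot_iff.mpr ⟨a * b, mul_mem_mul ha hb, mul_ne_zero ha0 hb0⟩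

theorem span_singleton_ne_bot {x : K} (hx : x ≠ 0) : span R {x} ≠ ⊥ := by
  simp [span_singleton_eq_bot, hx]

theorem mem_self_mul {x : K} {E : Submodule R K} (h : (1:K) ∈ E) : x ∈ span R {x} * E := by
  have h2 := mul_mem_mul (mem_span_singleton_self x) h
  rwa [mul_one] at h2

end Aux
section StarAux
set_option linter.unusedSectionVars false

open Submodule

variable {R K : Type*} [CommRing R] [IsDomain R] [Field K] [Algebra R K]
  [IsFractionRing R K] {s : SemistarOp R K}

theorem star_ne_bot {E : Submodule R K} (hE : E ≠ ⊥) : s.star E ≠ ⊥ := fun h =>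
  hE (le_bot_iff.mp (h ▸ s.le_star E hE))

theorem resid_self_eq_one (hcic : CICsub R K) {E : Submodule R K} (hE : E ≠ ⊥) (hE1 : E ≤ 1) :
    resid R K E E = 1 := by
  apply le_antisymm _ (one_le_resid_self E)
  intro x hx
  obtain ⟨y, hy, hy0⟩ := E.ne_bot_iff.mp hE
  obtain ⟨d, hd⟩ := Submodule.mem_one.mp (hE1 hy)
  refine hcic x ⟨d, ?_, fun n => ?_⟩
  · rintro rfl; rw [map_zero] at hd; exact hy0 hd.symm
  · have hp : x ^ n * y ∈ E := by
      induction n with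
      | zero => simpa using hy
      | succ n ih =>
        have he : x ^ (n + 1) * y = x * (x ^ n * y) := by ring
        rw [he]
        exact hx _ ih
    have h1 := hE1 hp
    rwa [Algebra.smul_def, hd, mul_comm]

theorem star_le_vop (hone : s.star 1 = 1) {E : Submodule R K} (hE : E ≠ ⊥) :
    s.star E ≤ vop R K E := by
  intro x hx y hy
  rcases eq_or_ne y 0 with rfl | hy0
  · simpa using Submodule.zero_mem (1 : Submodule R K)
  · have h1 : span R {y} * E ≤ 1 := le_resid_iff.mp (span_le.mpr (by simpa using hy))
    have h2 : s.star (span R {y} * E) ≤ 1 := by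
      rw [← hone]
      exact s.mono _ _ (mul_ne_bot (span_singleton_ne_bot hy0) hE) h1
    rw [s.star_smul y hy0 E hE] at h2
    rw [mul_comm]
    exact h2 (mul_mem_mul (mem_span_singleton_self y) hx)

theorem sstar_mul_star {A B : Submodule R K} (hA : A ≠ ⊥) (hB : B ≠ ⊥) :
    s.star (s.star A * B) = s.star (A * B) := by
  have h1 : s.star A * B ≤ s.star (A * B) := by
    rw [Submodule.mul_le]
    intro a ha b hb
    rcases eq_or_ne b 0 with rfl | hb0
    · simpa using Submodule.zero_mem (s.star (A * B))
    · have hle : span R {b} * A ≤ A * B := by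
        rw [mul_comm A B]
        exact mul_le_mul' (span_le.mpr (by simpa using hb)) le_rfl
      have h2 : s.star (span R {b} * A) ≤ s.star (A * B) :=
        s.mono _ _ (mul_ne_bot (span_singleton_ne_bot hb0) hA) hle
      rw [s.star_smul b hb0 A hA] at h2
      rw [mul_comm a b]
      exact h2 (mul_mem_mul (mem_span_singleton_self b) ha)
  apply le_antisymm
  · have h3 := s.mono _ _ (mul_ne_bot (star_ne_bot hA) hB) h1
    rwa [s.idem _ (mul_ne_bot hA hB)] at h3
  · exact s.mono _ _ (mul_ne_bot hA hB) (mul_le_mul' (s.le_star A hA) le_rfl)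

theorem resid_one_star (hone : s.star 1 = 1) {E : Submodule R K} (hE : E ≠ ⊥) :
    resid R K 1 (s.star E) = resid R K 1 E := by
  apply le_antisymm (resid_anti _ (s.le_star E hE))
  intro y hy z hz
  rcases eq_or_ne y 0 with rfl | hy0
  · simpa using Submodule.zero_mem (1 : Submodule R K)
  · have h1 : span R {y} * E ≤ 1 := le_resid_iff.mp (span_le.mpr (by simpa using hy))
    have h2 : s.star (span R {y} * E) ≤ 1 := by
      rw [← hone]
      exact s.mono _ _ (mul_ne_bot (span_singleton_ne_bot hy0) hE) h1
    rw [s.star_smul y hy0 E hE] at h2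
    exact h2 (mul_mem_mul (mem_span_singleton_self y) hz)

theorem sstar_inv (hone : s.star 1 = 1) (hst : s.StarStable) (hcic : CICsub R K)
    {I : Submodule R K} (hI : I ≠ ⊥) (hI1 : I ≤ 1) :
    s.star (s.star I * resid R K 1 (s.star I)) = 1 := by
  have h := hst I hI hI1 (by rw [one_mul])
  have hsne : s.star I ≠ ⊥ := star_ne_bot hI
  have hs1 : s.star I ≤ 1 := hone ▸ s.mono I 1 hI hI1
  rwa [resid_self_eq_one hcic hsne hs1] at h

theorem star_eq_vop_of_le_one (hone : s.star 1 = 1) (hst : s.StarStable) (hcic : CICsub R K)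
    {I : Submodule R K} (hI : I ≠ ⊥) (hI1 : I ≤ 1) :
    s.star I = vop R K I := by
  set A := s.star I with hA
  have hAne : A ≠ ⊥ := star_ne_bot hI
  have hA1 : A ≤ 1 := hone ▸ s.mono I 1 hI hI1
  have hBne : resid R K 1 A ≠ ⊥ := resid_one_ne_bot hA1
  have hinv : s.star (A * resid R K 1 A) = 1 := sstar_inv hone hst hcic hI hI1
  have hstA : s.star A = A := s.idem I hI
  have hvA : vop R K A ≤ A := by
    intro x hx
    rcases eq_or_ne x 0 with rfl | hx0
    · exact A.zero_mem
    have h1 : span R {x} * resid R K 1 A ≤ 1 := le_resid_iff.mp (span_le.mpr (Set.singleton_subset_iff.mpr hx))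
    have h2 : span R {x} * (A * resid R K 1 A) ≤ A := by
      rw [mul_left_comm]
      calc A * (span R {x} * resid R K 1 A) ≤ A * 1 := mul_le_mul' le_rfl h1
        _ = A := by rw [mul_one]
    have h3 : s.star (span R {x} * (A * resid R K 1 A)) ≤ s.star A :=
      s.mono _ _ (mul_ne_bot (span_singleton_ne_bot hx0) (mul_ne_bot hAne hBne)) h2
    rw [hstA] at h3
    rw [s.star_smul x hx0 _ (mul_ne_bot hAne hBne), hinv] at h3
    exact h3 (mem_self_mul one_mem_one)
  exact le_antisymm (star_le_vop hone hI) ((vop_mono (s.le_star I hI)).trans hvA)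

theorem exists_denominator {F : Submodule R K} (hF : F.FG) :
    ∃ c : K, c ≠ 0 ∧ span R {c} * F ≤ 1 := by
  obtain ⟨S, rfl⟩ := hF
  obtain ⟨b, hb⟩ := IsLocalization.exist_integer_multiples_of_finset (nonZeroDivisors R) S
  refine ⟨algebraMap R K b, IsFractionRing.to_map_ne_zero_of_mem_nonZeroDivisors b.2, ?_⟩
  rw [mul_comm]
  apply le_resid_iff.mp
  rw [span_le]
  intro a ha
  rw [SetLike.mem_coe, mem_resid_span_singleton]
  obtain ⟨r, hr⟩ := hb a ha
  exact Submodule.mem_one.mpr ⟨r, by rw [hr, Algebra.smul_def, mul_comm]⟩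

theorem star_eq_vop_of_fg (hone : s.star 1 = 1) (hst : s.StarStable) (hcic : CICsub R K)
    {F : Submodule R K} (hF : F.FG) (hFne : F ≠ ⊥) : s.star F = vop R K F := by
  obtain ⟨c, hc0, hcF⟩ := exists_denominator hF
  have hne : span R {c} * F ≠ ⊥ := mul_ne_bot (span_singleton_ne_bot hc0) hFne
  have h := star_eq_vop_of_le_one hone hst hcic hne hcF
  rw [s.star_smul c hc0 F hFne, vop_span_mul hc0] at h
  exact span_singleton_mul_cancel hc0 h

theorem star_eq_top (hone : s.star 1 = 1) (hft : s.FinType) (hst : s.StarStable)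
    (hcic : CICsub R K) {E : Submodule R K} (hE : E ≠ ⊥) : s.star E = top R K E := by
  rw [hft E hE]
  unfold top
  exact iSup_congr fun F => iSup_congr fun h => star_eq_vop_of_fg hone hst hcic h.1 h.2.1

theorem mem_top_iff {E : Submodule R K} (hE : E ≠ ⊥) {x : K} :
    x ∈ top R K E ↔ ∃ F : Submodule R K, (F.FG ∧ F ≠ ⊥ ∧ F ≤ E) ∧ x ∈ vop R K F := by
  obtain ⟨y, hy, hy0⟩ := E.ne_bot_iff.mp hE
  have hnon : Nonempty {F : Submodule R K // F.FG ∧ F ≠ ⊥ ∧ F ≤ E} :=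
    ⟨⟨span R {y}, fg_span_singleton y, span_singleton_ne_bot hy0,
      span_le.mpr (by simpa using hy)⟩⟩
  have hdir : Directed (· ≤ ·) fun F : {F : Submodule R K // F.FG ∧ F ≠ ⊥ ∧ F ≤ E} =>
      vop R K F.1 := by
    rintro ⟨F1, hF1⟩ ⟨F2, hF2⟩
    refine ⟨⟨F1 ⊔ F2, hF1.1.sup hF2.1, ?_, sup_le hF1.2.2 hF2.2.2⟩,
      vop_mono le_sup_left, vop_mono le_sup_right⟩
    intro h
    exact hF1.2.1 (le_bot_iff.mp (h ▸ (le_sup_left : F1 ≤ F1 ⊔ F2)))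
  unfold top
  rw [iSup_subtype', Submodule.mem_iSup_of_directed _ hdir]
  constructor
  · rintro ⟨⟨F, hF⟩, hx⟩; exact ⟨F, hF, hx⟩
  · rintro ⟨F, hF, hx⟩; exact ⟨⟨F, hF⟩, hx⟩

theorem top_mul_resid (hone : s.star 1 = 1) (hft : s.FinType) (hst : s.StarStable)
    (hcic : CICsub R K) {I : Submodule R K} (hI : I ≠ ⊥) (hI1 : I ≤ 1) :
    top R K (I * resid R K 1 I) = 1 := by
  have hBne : resid R K 1 I ≠ ⊥ := resid_one_ne_bot hI1
  have h5 := sstar_inv hone hst hcic hI hI1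
  rw [resid_one_star hone hI, sstar_mul_star hI hBne] at h5
  rw [← star_eq_top hone hft hst hcic (mul_ne_bot hI hBne)]
  exact h5

end StarAux
section FinAux
set_option linter.unusedSectionVars false

open Submodule

variable {R K : Type*} [CommRing R] [IsDomain R] [Field K] [Algebra R K]
  [IsFractionRing R K] {s : SemistarOp R K}

theorem fg_le_mul {F A B : Submodule R K} (hF : F.FG) (h : F ≤ A * B) :
    ∃ A₀ B₀ : Submodule R K, A₀.FG ∧ B₀.FG ∧ A₀ ≤ A ∧ B₀ ≤ B ∧ F ≤ A₀ * B₀ := by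
  classical
  have elt : ∀ g ∈ A * B, ∃ A₀ B₀ : Submodule R K,
      A₀.FG ∧ B₀.FG ∧ A₀ ≤ A ∧ B₀ ≤ B ∧ g ∈ A₀ * B₀ := by
    intro g hg
    refine Submodule.mul_induction_on hg ?_ ?_
    · intro a ha b hb
      exact ⟨span R {a}, span R {b}, fg_span_singleton a, fg_span_singleton b,
        span_le.mpr (by simpa using ha), span_le.mpr (by simpa using hb),
        mul_mem_mul (mem_span_singleton_self a) (mem_span_singleton_self b)⟩
    · rintro x y ⟨A₁, B₁, hA₁, hB₁, hA₁le, hB₁le, hx⟩ ⟨A₂, B₂, hA₂, hB₂, hA₂le, hB₂le, hy⟩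
      exact ⟨A₁ ⊔ A₂, B₁ ⊔ B₂, hA₁.sup hA₂, hB₁.sup hB₂, sup_le hA₁le hA₂le,
        sup_le hB₁le hB₂le,
        add_mem (SetLike.le_def.mp (mul_le_mul' (le_sup_left : A₁ ≤ A₁ ⊔ A₂) (le_sup_left : B₁ ≤ B₁ ⊔ B₂)) hx)
          (SetLike.le_def.mp (mul_le_mul' (le_sup_right : A₂ ≤ A₁ ⊔ A₂) (le_sup_right : B₂ ≤ B₁ ⊔ B₂)) hy)⟩
  obtain ⟨S, rfl⟩ := hF
  rw [span_le] at h
  induction S using Finset.induction_on with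
  | empty =>
    exact ⟨⊥, ⊥, fg_bot, fg_bot, bot_le, bot_le, by simp⟩
  | @insert a S ha ih =>
    have hsub : (S : Set K) ⊆ (↑(A * B) : Set K) := fun x hx => h (by simp [hx])
    obtain ⟨A₁, B₁, hA₁, hB₁, hA₁le, hB₁le, hx⟩ := ih hsub
    obtain ⟨A₂, B₂, hA₂, hB₂, hA₂le, hB₂le, hy⟩ := elt a (h (by simp))
    refine ⟨A₁ ⊔ A₂, B₁ ⊔ B₂, hA₁.sup hA₂, hB₁.sup hB₂, sup_le hA₁le hA₂le,
      sup_le hB₁le hB₂le, ?_⟩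
    rw [Finset.coe_insert, span_insert]
    apply sup_le
    · rw [span_le]
      intro z hz
      rcases Set.mem_singleton_iff.mp hz with rfl
      exact SetLike.le_def.mp (mul_le_mul' (le_sup_right : A₂ ≤ A₁ ⊔ A₂) (le_sup_right : B₂ ≤ B₁ ⊔ B₂)) hy
    · exact hx.trans (mul_le_mul' le_sup_left le_sup_left)

theorem exists_fg_vop_one (hone : s.star 1 = 1) (hft : s.FinType) (hst : s.StarStable)
    (hcic : CICsub R K) {I : Submodule R K} (hI : I ≠ ⊥) (hI1 : I ≤ 1) :
    ∃ I₀ H : Submodule R K, I₀.FG ∧ H.FG ∧ I₀ * H ≠ ⊥ ∧ I₀ ≤ I ∧ H ≤ resid R K 1 I ∧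
      vop R K (I₀ * H) = 1 := by
  have hBne : resid R K 1 I ≠ ⊥ := resid_one_ne_bot hI1
  have hprod_ne : I * resid R K 1 I ≠ ⊥ := mul_ne_bot hI hBne
  have h1 : (1 : K) ∈ top R K (I * resid R K 1 I) := by
    rw [top_mul_resid hone hft hst hcic hI hI1]
    exact one_mem_one
  obtain ⟨F, ⟨hFfg, hFne, hFle⟩, hvF⟩ := (mem_top_iff hprod_ne).mp h1
  obtain ⟨I₀, H, hI₀fg, hHfg, hI₀le, hHle, hFle'⟩ := fg_le_mul hFfg hFle
  have hprodne : I₀ * H ≠ ⊥ := fun hb => hFne (le_bot_iff.mp (hb ▸ hFle'))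
  refine ⟨I₀, H, hI₀fg, hHfg, hprodne, hI₀le, hHle, le_antisymm ?_ ?_⟩
  · apply vop_le_one
    calc I₀ * H ≤ I * resid R K 1 I := mul_le_mul' hI₀le hHle
      _ ≤ 1 := by rw [mul_comm]; exact resid_mul_le 1 I
  · rw [Submodule.one_le]
    exact vop_mono hFle' hvF

theorem resid_one_eq_of_vop_one {I I₀ H : Submodule R K} (hI₀ : I₀ ≤ I)
    (hH : H ≤ resid R K 1 I) (hv : vop R K (I₀ * H) = 1) :
    resid R K 1 I₀ = resid R K 1 I := by
  apply le_antisymm _ (resid_anti _ hI₀)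
  intro x hx
  rcases eq_or_ne x 0 with rfl | hx0
  · intro y hy; simpa using Submodule.zero_mem (1 : Submodule R K)
  · have h1 : x ∈ span R {x} * vop R K (I₀ * H) := by
      rw [hv]; exact mem_self_mul one_mem_one
    rw [← vop_span_mul hx0] at h1
    have h2 : span R {x} * (I₀ * H) ≤ resid R K 1 I := by
      have hx1 : span R {x} * I₀ ≤ 1 := le_resid_iff.mp (span_le.mpr (by simpa using hx))
      calc span R {x} * (I₀ * H) = span R {x} * I₀ * H := by rw [mul_assoc]
        _ ≤ 1 * H := mul_le_mul' hx1 le_rfl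
        _ = H := by rw [one_mul]
        _ ≤ resid R K 1 I := hH
    have h3 := vop_mono h2
    rw [vop_resid_one] at h3
    exact h3 h1

theorem vop_eq_vop_fg (hone : s.star 1 = 1) (hft : s.FinType) (hst : s.StarStable)
    (hcic : CICsub R K) {I : Submodule R K} (hI : I ≠ ⊥) (hI1 : I ≤ 1) :
    ∃ I₀ : Submodule R K, I₀.FG ∧ I₀ ≤ I ∧ vop R K I = vop R K I₀ := by
  obtain ⟨I₀, H, hI₀fg, hHfg, hne, hI₀le, hHle, hv⟩ :=
    exists_fg_vop_one hone hft hst hcic hI hI1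
  have heq := resid_one_eq_of_vop_one hI₀le hHle hv
  exact ⟨I₀, hI₀fg, hI₀le, by unfold vop; rw [heq]⟩

theorem acc_divisorial (hone : s.star 1 = 1) (hft : s.FinType) (hst : s.StarStable)
    (hcic : CICsub R K) :
    ∀ c : ℕ → Submodule R K,
      (∀ n, c n ≠ ⊥ ∧ c n ≤ 1 ∧ vop R K (c n) = c n) → Monotone c →
        ∃ n, ∀ m, n ≤ m → c m = c n := by
  classical
  intro c hc hm
  set I := ⨆ n, c n with hIdef
  have hIne : I ≠ ⊥ := fun h => (hc 0).1 (le_bot_iff.mp (h ▸ le_iSup c 0))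
  have hI1 : I ≤ 1 := iSup_le fun n => (hc n).2.1
  obtain ⟨I₀, hfg, hle, hvop⟩ := vop_eq_vop_fg hone hft hst hcic hIne hI1
  obtain ⟨S, hS⟩ := hfg
  have hdir : Directed (· ≤ ·) c := hm.directed_le
  have hmem : ∀ x ∈ S, ∃ n, x ∈ c n := fun x hx =>
    (Submodule.mem_iSup_of_directed c hdir).mp (hle (hS ▸ subset_span hx))
  choose f hf using hmem
  refine ⟨S.attach.sup fun x => f x.1 x.2, fun m hmn => ?_⟩
  set n := S.attach.sup fun x => f x.1 x.2 with hn
  have hI₀n : I₀ ≤ c n := by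
    rw [← hS, span_le]
    intro x hx
    exact hm (Finset.le_sup (f := fun x : {x // x ∈ S} => f x.1 x.2)
      (Finset.mem_attach S ⟨x, hx⟩)) (hf x hx)
  have h1 : c m ≤ c n := by
    have h2 : c m ≤ vop R K I := (le_vop _).trans (vop_mono (le_iSup c m))
    rw [hvop] at h2
    exact h2.trans ((vop_mono hI₀n).trans (le_of_eq (hc n).2.2))
  exact le_antisymm h1 (hm hmn)

end FinAux
section WAux
set_option linter.unusedSectionVars false

open Submodule

variable {R K : Type*} [CommRing R] [IsDomain R] [Field K] [Algebra R K]
  [IsFractionRing R K] {s : SemistarOp R K}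

theorem top_le_vop {E : Submodule R K} : top R K E ≤ vop R K E := by
  unfold top
  exact iSup₂_le fun F h => vop_mono h.2.2

theorem wop_le_star (hone : s.star 1 = 1) (hft : s.FinType) (hst : s.StarStable)
    (hcic : CICsub R K) {E : Submodule R K} (hE : E ≠ ⊥) : wop R K E ≤ s.star E := by
  unfold wop
  refine iSup₂_le fun F hF => ?_
  obtain ⟨hFfg, hFne, hFtop⟩ := hF
  intro x hx
  rcases eq_or_ne x 0 with rfl | hx0
  · exact Submodule.zero_mem _
  have h1 : span R {x} * F ≤ E := le_resid_iff.mp (span_le.mpr (by simpa using hx))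
  have h2 : s.star (span R {x} * F) ≤ s.star E :=
    s.mono _ _ (mul_ne_bot (span_singleton_ne_bot hx0) hFne) h1
  rw [s.star_smul x hx0 F hFne] at h2
  have h3 : s.star F = 1 := by rw [star_eq_top hone hft hst hcic hFne, hFtop]
  apply h2
  rw [h3]
  exact mem_self_mul one_mem_one

theorem star_le_wop (hone : s.star 1 = 1) (hft : s.FinType) (hst : s.StarStable)
    (hcic : CICsub R K) {E : Submodule R K} (hE : E ≠ ⊥) : s.star E ≤ wop R K E := by
  intro x hx
  rw [star_eq_top hone hft hst hcic hE, mem_top_iff hE] at hx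
  obtain ⟨F, ⟨hFfg, hFne, hFle⟩, hxF⟩ := hx
  obtain ⟨c, hc0, hcF⟩ := exists_denominator hFfg
  set I := span R {c} * F with hI
  have hIne : I ≠ ⊥ := mul_ne_bot (span_singleton_ne_bot hc0) hFne
  obtain ⟨I₀, H, hI₀fg, hHfg, hGne, hI₀le, hHle, hv⟩ :=
    exists_fg_vop_one hone hft hst hcic hIne hcF
  set G := I₀ * H with hG
  have hGfg : G.FG := hI₀fg.mul hHfg
  have hG1 : G ≤ 1 := by
    calc G ≤ I * resid R K 1 I := mul_le_mul' hI₀le hHle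
      _ ≤ 1 := by rw [mul_comm]; exact resid_mul_le 1 I
  have hGtop : top R K G = 1 := by
    apply le_antisymm (top_le_vop.trans (le_of_eq hv))
    rw [← hv]
    unfold top
    exact le_iSup₂ (f := fun F _ => vop R K F) G ⟨hGfg, hGne, le_rfl⟩
  have hsub : G ≤ resid R K E (span R {x}) := by
    refine le_trans (mul_le_mul' hI₀le le_rfl) ?_
    rw [hI, Submodule.mul_le]
    intro i hi h hh
    obtain ⟨f, hf, rfl⟩ := mem_span_singleton_mul.mp hi
    rw [mem_resid_span_singleton]
    have hch : c * h ∈ resid R K 1 F := mem_resid_span_mul.mp (hHle hh)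
    have hx1 : x * (c * h) ∈ (1 : Submodule R K) := hxF (c * h) hch
    obtain ⟨r, hr⟩ := Submodule.mem_one.mp hx1
    have : c * f * h * x = r • f := by
      rw [Algebra.smul_def, hr]; ring
    rw [this]
    exact hFle (F.smul_mem r hf)
  have hmem : x ∈ resid R K E G := by
    intro g hg
    rw [mul_comm]
    exact mem_resid_span_singleton.mp (hsub hg)
  have hle : resid R K E G ≤ wop R K E := by
    unfold wop
    exact le_iSup₂ (f := fun F _ => resid R K E F) G ⟨hGfg, hGne, hGtop⟩
  exact hle hmem

end WAux
/-- if `⋆` is a (semi)star operation of finite type and `R` is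
`⋆`-stable and completely integrally closed, then `R` is a Krull domain and
`⋆ = t = w`. -/
theorem statement_14 {R K : Type*} [CommRing R] [IsDomain R] [Field K] [Algebra R K]
    [IsFractionRing R K] (s : SemistarOp R K) (hone : s.star 1 = 1)
    (hft : s.FinType) (hst : s.StarStable) (hcic : CICsub R K) :
    IsKrullSub R K ∧
      ∀ E : Submodule R K, E ≠ ⊥ → s.star E = top R K E ∧ top R K E = wop R K E := by
  refine ⟨⟨hcic, acc_divisorial hone hft hst hcic⟩, fun E hE => ?_⟩
  have h1 : s.star E = top R K E := star_eq_top hone hft hst hcic hE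
  refine ⟨h1, le_antisymm ?_ ?_⟩
  · rw [← h1]
    exact star_le_wop hone hft hst hcic hE
  · rw [← h1]
    exact wop_le_star hone hft hst hcic hE
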